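/- Best approximation for the projection-stabilised Lagrange multiplier method (Theorem 2.3, error estimate): Suppose (u, λ) ∈ V × L solves the continuous problem and (u_h, λ_h) ∈ V_h × Λ_h solves the stabilised discrete problem with the same right-hand side F. Then there exists a constant C > 0, depending only on the constants of the framework (M_a, M_b, β, C_V, C_F, C_π, C_s, α_ξ, c_s) and not on u, λ or F, such that ‖u − u_h‖_V + ‖λ − λ_h‖_L ≤ C · ( inf over y_h ∈ V_h of ‖u − y_h‖_V + inf over ν_h ∈ Λ_h of ( ‖λ − ν_h‖_L + s(ν_h, ν_h)^{1/2} ) ). -/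

import Mathlib

lemma aux_sCS {L : Type*} [AddCommGroup L] [Module ℝ L]
    (s : L →ₗ[ℝ] L →ₗ[ℝ] ℝ) (Λh : Submodule ℝ L)
    (hsymm : ∀ x ∈ Λh, ∀ y ∈ Λh, s x y = s y x)
    (hpos : ∀ x ∈ Λh, 0 ≤ s x x)
    {x y : L} (hx : x ∈ Λh) (hy : y ∈ Λh) :
    |s x y| ≤ Real.sqrt (s x x) * Real.sqrt (s y y) := by
  have key : (s x y)^2 ≤ s x x * s y y := by
    have hq : ∀ t : ℝ, 0 ≤ s x x + 2 * t * s x y + t^2 * s y y := by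
      intro t
      have hmem : x + t • y ∈ Λh := Λh.add_mem hx (Λh.smul_mem t hy)
      have h0 := hpos _ hmem
      have hsym := hsymm x hx y hy
      simp only [map_add, map_smul, LinearMap.add_apply, LinearMap.smul_apply,
        smul_eq_mul] at h0
      rw [← hsym] at h0
      nlinarith [h0]
    rcases eq_or_lt_of_le (hpos y hy) with hC | hC
    · have hB : s x y = 0 := by
        by_contra hB
        have habs : (0:ℝ) < |s x y| := abs_pos.mpr hB
        have hne : (2 : ℝ) * s x y ≠ 0 := by
          intro h; apply hB; linarith [mul_eq_zero.mp h |>.resolve_left (by norm_num)]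
        have ht := hq ((- s x x - 1) / (2 * s x y))
        have heq : 2 * ((- s x x - 1) / (2 * s x y)) * s x y = - s x x - 1 := by
          field_simp
        rw [← hC] at ht
        rw [mul_zero] at ht
        linarith [heq ▸ ht]
      rw [hB, ← hC]; nlinarith [hpos x hx]
    · have ht := hq (- s x y / s y y)
      have heq : s x x + 2 * (- s x y / s y y) * s x y + (- s x y / s y y)^2 * s y y
          = s x x - (s x y)^2 / s y y := by
        field_simp; ring
      rw [heq] at ht
      rw [sub_nonneg, div_le_iff₀ hC] at ht
      linarith [ht]
  have h1 : 0 ≤ Real.sqrt (s x x) * Real.sqrt (s y y) :=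
    mul_nonneg (Real.sqrt_nonneg _) (Real.sqrt_nonneg _)
  have h2 : (Real.sqrt (s x x) * Real.sqrt (s y y))^2 = s x x * s y y := by
    rw [mul_pow, Real.sq_sqrt (hpos x hx), Real.sq_sqrt (hpos y hy)]
  nlinarith [abs_nonneg (s x y), sq_abs (s x y)]

lemma aux_quad (δ K1 K2 X Y D : ℝ) (hδ : 0 < δ) (hX : 0 ≤ X) (hY : 0 ≤ Y) (hD : 0 ≤ D)
    (hK1 : 0 ≤ K1) (hK2 : 0 ≤ K2)
    (h : δ * X^2 + Y^2/2 ≤ K1 * D * X + K2 * D * Y) :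
    X + Y ≤ (2 * (K1 + K2) / min δ (1/2)) * D := by
  set m := min δ (1/2) with hm
  have hm0 : 0 < m := lt_min hδ (by norm_num)
  have h1 : m * (X + Y)^2 ≤ 2 * (δ * X^2 + Y^2/2) := by
    have hmδ : m ≤ δ := min_le_left _ _
    have hm2 : m ≤ 1/2 := min_le_right _ _
    nlinarith [sq_nonneg (X - Y), sq_nonneg X, sq_nonneg Y,
      mul_nonneg (sub_nonneg.mpr hmδ) (sq_nonneg X),
      mul_nonneg (sub_nonneg.mpr hm2) (sq_nonneg Y)]
  have h2 : m * (X + Y)^2 ≤ 2 * (K1 + K2) * D * (X + Y) := by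
    refine h1.trans ?_
    nlinarith [mul_nonneg (mul_nonneg hK1 hD) hY, mul_nonneg (mul_nonneg hK2 hD) hX]
  rcases eq_or_lt_of_le (add_nonneg hX hY) with hZ | hZ
  · rw [← hZ]
    positivity
  · have h3 : m * (X + Y) ≤ 2 * (K1 + K2) * D := by
      have hmul := mul_le_mul_of_nonneg_right h2 (le_of_lt (inv_pos.mpr hZ))
      calc m * (X + Y) = m * (X+Y)^2 * (X+Y)⁻¹ := by field_simp
        _ ≤ 2 * (K1 + K2) * D * (X + Y) * (X+Y)⁻¹ := hmul
        _ = 2 * (K1 + K2) * D := by field_simp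
    rw [div_mul_eq_mul_div, le_div_iff₀ hm0]
    linarith [h3]

lemma aux_sqdom (c X D : ℝ) (hc : 0 ≤ c) (hX : 0 ≤ X) (hD : 0 ≤ D) (h : X^2 ≤ c * D^2) :
    X ≤ (c + 1) * D := by
  rcases le_or_gt X D with h1 | h1
  · nlinarith
  · nlinarith [mul_le_mul_of_nonneg_left h1.le (mul_nonneg hc hD)]


set_option maxHeartbeats 2000000 in
/-- **Best approximation for the projection-stabilised Lagrange multiplier method
(Theorem 2.3, error estimate).**
If `(u, λ)` solves the continuous problem and `(u_h, λ_h)` solves the stabilised discrete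
problem with the same right-hand side `F`, then
`‖u − u_h‖_V + ‖λ − λ_h‖_L ≤ C (inf_{y_h ∈ V_h} ‖u − y_h‖_V
  + inf_{ν_h ∈ Λ_h} (‖λ − ν_h‖_L + s(ν_h,ν_h)^{1/2}))`
with `C` depending only on the constants of the framework, not on `u`, `λ` or `F`. -/
theorem best_approximation_projection_stabilised
    {V L : Type*} [NormedAddCommGroup V] [NormedSpace ℝ V]
    [NormedAddCommGroup L] [NormedSpace ℝ L]
    -- bilinear forms and their continuity
    (a : V →ₗ[ℝ] V →ₗ[ℝ] ℝ) (b : L →ₗ[ℝ] V →ₗ[ℝ] ℝ)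
    (Ma : ℝ) (hMa : 0 < Ma)
    (ha_cont : ∀ u v : V, |a u v| ≤ Ma * ‖u‖ * ‖v‖)
    (Mb : ℝ) (hMb : 0 < Mb)
    (hb_cont : ∀ (lam : L) (v : V), |b lam v| ≤ Mb * ‖lam‖ * ‖v‖)
    -- continuous inf-sup condition
    (β : ℝ) (hβ : 0 < β)
    (h_infsup : ∀ lam : L, β * ‖lam‖ ≤ ⨆ v : {v : V // v ≠ 0}, b lam v.1 / ‖v.1‖)
    -- discrete subspaces
    (Vh : Submodule ℝ V) (Lh Λh : Submodule ℝ L)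
    -- discrete norm on V_h
    (nVh : V → ℝ) (CV : ℝ) (hCV : 0 < CV)
    (hnVh_nonneg : ∀ v ∈ Vh, 0 ≤ nVh v)
    (hnVh_def : ∀ v ∈ Vh, nVh v = 0 → v = 0)
    (hnVh_add : ∀ v ∈ Vh, ∀ w ∈ Vh, nVh (v + w) ≤ nVh v + nVh w)
    (hnVh_smul : ∀ (r : ℝ), ∀ v ∈ Vh, nVh (r • v) = |r| * nVh v)
    (hV_comp : ∀ v ∈ Vh, ‖v‖ ≤ CV * nVh v)
    -- discrete norm on L_h + Λ_h
    (nLh : L → ℝ)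
    (hnLh_nonneg : ∀ x ∈ Lh ⊔ Λh, 0 ≤ nLh x)
    (hnLh_def : ∀ x ∈ Lh ⊔ Λh, nLh x = 0 → x = 0)
    (hnLh_add : ∀ x ∈ Lh ⊔ Λh, ∀ y ∈ Lh ⊔ Λh, nLh (x + y) ≤ nLh x + nLh y)
    (hnLh_smul : ∀ (r : ℝ), ∀ x ∈ Lh ⊔ Λh, nLh (r • x) = |r| * nLh x)
    -- discrete continuities
    (ha_disc : ∀ u ∈ Vh, ∀ v ∈ Vh, |a u v| ≤ nVh u * nVh v)
    (hb_disc : ∀ lam ∈ Lh ⊔ Λh, ∀ v ∈ Vh, |b lam v| ≤ nLh lam * nVh v)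
    -- Fortin operator
    (πF : V →ₗ[ℝ] V) (hπF_mem : ∀ v : V, πF v ∈ Vh)
    (hπF_orth : ∀ μ ∈ Lh, ∀ v : V, b μ (v - πF v) = 0)
    (hπF_proj : ∀ v ∈ Vh, πF v = v)
    (CF : ℝ) (hCF : 0 < CF)
    (hπF_stab : ∀ v : V, ‖πF v‖ ≤ CF * ‖v‖)
    -- stabilising projection π_L : Λ_h → L_h
    (πL : L →ₗ[ℝ] L) (hπL_mem : ∀ x ∈ Λh, πL x ∈ Lh)
    (Cπ : ℝ) (hCπ : 0 < Cπ)
    (hπL_cont : ∀ x ∈ Λh, ∀ v : V, |b (x - πL x) v| ≤ Cπ * nLh (x - πL x) * ‖v‖)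
    -- stabilisation form: symmetric, positive semidefinite, controlling the projection error
    (s : L →ₗ[ℝ] L →ₗ[ℝ] ℝ)
    (hs_symm : ∀ x ∈ Λh, ∀ y ∈ Λh, s x y = s y x)
    (hs_pos : ∀ x ∈ Λh, 0 ≤ s x x)
    (Cs : ℝ) (hCs : 0 < Cs)
    (hs_stab : ∀ x ∈ Λh, nLh (x - πL x) ^ 2 ≤ Cs * s x x)
    -- coercivity assumption
    (ξh : V → L) (hξh_mem : ∀ u ∈ Vh, ξh u ∈ Λh)
    (αξ cs : ℝ) (hαξ : 0 < αξ) (hcs : 0 ≤ cs)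
    (hcoer : ∀ u ∈ Vh, αξ * nVh u ^ 2 ≤ a u u + b (ξh u) u)
    (hξs : ∀ u ∈ Vh, Real.sqrt (s (ξh u) (ξh u)) ≤ cs * nVh u)
    (hsmall : cs ^ 2 < 2 * αξ) :
    ∃ C > 0, ∀ (F : V →L[ℝ] ℝ) (u : V) (lam : L) (uh : V) (lamh : L),
      uh ∈ Vh → lamh ∈ Λh →
      -- continuous problem
      (∀ (v : V) (μ : L), a u v + b lam v + b μ u = F v) →
      -- stabilised discrete problem
      (∀ v ∈ Vh, ∀ μ ∈ Λh, a uh v + b lamh v + b μ uh - s lamh μ = F v) →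
      ‖u - uh‖ + ‖lam - lamh‖ ≤
        C * ((⨅ y : Vh, ‖u - (y : V)‖) +
          ⨅ ν : Λh, (‖lam - (ν : L)‖ + Real.sqrt (s (ν : L) (ν : L)))) := by

  -- shorthand
  have hsCs : (0:ℝ) ≤ Real.sqrt Cs := Real.sqrt_nonneg _
  -- abstract constants
  obtain ⟨P, hPdef, hP0⟩ : ∃ P, P = Cπ * Real.sqrt Cs ∧ 0 ≤ P :=
    ⟨_, rfl, mul_nonneg hCπ.le hsCs⟩
  obtain ⟨δ, hδdef, hδ0⟩ : ∃ d, d = αξ - cs^2/2 ∧ 0 < d := ⟨_, rfl, by nlinarith⟩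
  obtain ⟨K1, hK1def, hK10⟩ : ∃ k, k = cs + cs*P + Ma*CV + Mb*CV ∧ 0 ≤ k :=
    ⟨_, rfl, by nlinarith [mul_nonneg hcs hP0, mul_pos hMa hCV, mul_pos hMb hCV]⟩
  obtain ⟨K2, hK2def, hK20⟩ : ∃ k, k = P + 1 ∧ 0 ≤ k := ⟨_, rfl, by linarith⟩
  obtain ⟨K4, hK4def, hK40⟩ : ∃ k, k = 2 * (K1 + K2) / min δ (1/2) ∧ 0 ≤ k :=
    ⟨_, rfl, div_nonneg (by linarith) (le_of_lt (lt_min hδ0 one_half_pos))⟩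
  obtain ⟨G, hGdef, hG0⟩ : ∃ k, k = Ma*CF*(1+CV*K4) + Mb*CF + P*(1+CF)*K4 ∧ 0 ≤ k := by
    refine ⟨_, rfl, ?_⟩
    have h1 : 0 ≤ Ma*CF*(1+CV*K4) :=
      mul_nonneg (mul_nonneg hMa.le hCF.le) (by nlinarith [mul_nonneg hCV.le hK40])
    have h2 : 0 ≤ Mb*CF := mul_nonneg hMb.le hCF.le
    have h3 : 0 ≤ P*(1+CF)*K4 := mul_nonneg (mul_nonneg hP0 (by linarith)) hK40
    linarith
  obtain ⟨C0, hC0def, hC00⟩ : ∃ k, k = 2 + CV*K4 + G/β ∧ 2 ≤ k := by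
    refine ⟨_, rfl, ?_⟩
    have h1 : 0 ≤ CV*K4 := mul_nonneg hCV.le hK40
    have h2 : 0 ≤ G/β := div_nonneg hG0 hβ.le
    linarith
  have hCpos : 0 < C0 * (1 + CF) := by nlinarith
  -- the generic Fortin-projection bound
  have hπFv : ∀ v : V, ‖v - πF v‖ ≤ (1+CF)*‖v‖ := by
    intro v
    calc ‖v - πF v‖ ≤ ‖v‖ + ‖πF v‖ := norm_sub_le _ _
      _ ≤ (1+CF)*‖v‖ := by linarith [hπF_stab v]
  have hbg : ∀ w ∈ Λh, ∀ v : V,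
      |b w (v - πF v)| ≤ Cπ * (Real.sqrt Cs * Real.sqrt (s w w)) * ‖v - πF v‖ := by
    intro w hw v
    have hz : b (πL w) (v - πF v) = 0 := hπF_orth _ (hπL_mem w hw) v
    have hsplit : b (w - πL w) (v - πF v) = b w (v - πF v) := by
      rw [map_sub b w (πL w), LinearMap.sub_apply, hz, sub_zero]
    rw [← hsplit]
    have h1 := hπL_cont w hw (v - πF v)
    have h2 : nLh (w - πL w) ≤ Real.sqrt Cs * Real.sqrt (s w w) := by
      have hmem : w - πL w ∈ Lh ⊔ Λh :=
        Submodule.sub_mem _ (Submodule.mem_sup_right hw) (Submodule.mem_sup_left (hπL_mem w hw))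
      have hnn := hnLh_nonneg _ hmem
      have hsq := hs_stab w hw
      have h3 : nLh (w - πL w) ≤ Real.sqrt (Cs * s w w) :=
        (Real.le_sqrt hnn (mul_nonneg hCs.le (hs_pos w hw))).mpr hsq
      rwa [Real.sqrt_mul hCs.le] at h3
    calc |b (w - πL w) (v - πF v)| ≤ Cπ * nLh (w - πL w) * ‖v - πF v‖ := h1
      _ ≤ Cπ * (Real.sqrt Cs * Real.sqrt (s w w)) * ‖v - πF v‖ :=
        mul_le_mul_of_nonneg_right (mul_le_mul_of_nonneg_left h2 hCπ.le) (norm_nonneg _)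
  refine ⟨C0 * (1 + CF), hCpos, ?_⟩
  intro F u lam uh lamh huh hlamh hcont hdisc
  -- consequences of the continuous problem
  have hC1 : ∀ v : V, a u v + b lam v = F v := by
    intro v; have h := hcont v 0; simpa using h
  have hC2 : ∀ μ : L, b μ u = 0 := by
    intro μ; have h := hcont 0 μ; simpa using h
  -- consequences of the discrete problem
  have hD1 : ∀ v ∈ Vh, a uh v + b lamh v = F v := by
    intro v hv; have h := hdisc v hv 0 (zero_mem _); simpa using h
  have hD2 : ∀ μ ∈ Λh, b μ uh = s lamh μ := by
    intro μ hμ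
    have h := hdisc 0 (zero_mem _) μ hμ
    simp only [map_zero, LinearMap.zero_apply, ContinuousLinearMap.map_zero, zero_add] at h
    linarith
  -- the key estimate, for fixed approximants y, ν
  have hkey : ∀ y ∈ Vh, ∀ ν ∈ Λh, ‖u - uh‖ + ‖lam - lamh‖ ≤
      C0 * (1 + CF) * (‖u - y‖ + (‖lam - ν‖ + Real.sqrt (s ν ν))) := by
    intro y hy ν hν
    have he : uh - πF u ∈ Vh := Vh.sub_mem huh (hπF_mem u)
    have hg : lamh - ν ∈ Λh := Λh.sub_mem hlamh hν
    have hxi : ξh (uh - πF u) ∈ Λh := hξh_mem _ he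
    -- abbreviations (explicit)
    have hX0 : 0 ≤ nVh (uh - πF u) := hnVh_nonneg _ he
    have hY0 : (0:ℝ) ≤ Real.sqrt (s (lamh - ν) (lamh - ν)) := Real.sqrt_nonneg _
    have hD10 : (0:ℝ) ≤ ‖u - πF u‖ := norm_nonneg _
    have hD20 : (0:ℝ) ≤ ‖lam - ν‖ := norm_nonneg _
    have hD30 : (0:ℝ) ≤ Real.sqrt (s ν ν) := Real.sqrt_nonneg _
    have hSξ0 : (0:ℝ) ≤ Real.sqrt (s (ξh (uh - πF u)) (ξh (uh - πF u))) := Real.sqrt_nonneg _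
    have hY2 : Real.sqrt (s (lamh - ν) (lamh - ν)) ^ 2 = s (lamh - ν) (lamh - ν) :=
      Real.sq_sqrt (hs_pos _ hg)
    have hSξ2 : Real.sqrt (s (ξh (uh - πF u)) (ξh (uh - πF u))) ^ 2
        = s (ξh (uh - πF u)) (ξh (uh - πF u)) := Real.sq_sqrt (hs_pos _ hxi)
    have hecv : ‖uh - πF u‖ ≤ CV * nVh (uh - πF u) := hV_comp _ he
    -- energy identity
    have hEid : a (uh - πF u) (uh - πF u) + s (lamh - ν) (lamh - ν)
        = a (u - πF u) (uh - πF u) + b (lam - ν) (uh - πF u)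
          - s ν (lamh - ν) - b (lamh - ν) (u - πF u) := by
      have f1 := hC1 (uh - πF u)
      have f2 := hD1 (uh - πF u) he
      have f3 := hD2 (lamh - ν) hg
      have f4 := hC2 (lamh - ν)
      simp only [map_sub, LinearMap.sub_apply, ContinuousLinearMap.map_sub] at f1 f2 f3 f4 ⊢
      linarith
    -- coercivity identity
    have hbxi_id : b (ξh (uh - πF u)) (uh - πF u)
        = s (lamh - ν) (ξh (uh - πF u)) + s ν (ξh (uh - πF u))
          + b (ξh (uh - πF u)) (u - πF u) := by
      have f5 := hD2 _ hxi
      have f6 := hC2 (ξh (uh - πF u))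
      simp only [map_sub, LinearMap.sub_apply]
      linarith
    have hco := hcoer (uh - πF u) he
    have hSξX := hξs _ he
    -- Cauchy–Schwarz bounds
    have b1 := aux_sCS s Λh hs_symm hs_pos hg hxi
    have b2 := aux_sCS s Λh hs_symm hs_pos hν hxi
    have b4 := aux_sCS s Λh hs_symm hs_pos hν hg
    have b3 := hbg _ hxi u
    have b7 := hbg _ hg u
    have b5 := ha_cont (u - πF u) (uh - πF u)
    have b6 := hb_cont (lam - ν) (uh - πF u)
    -- step 2 : coercivity estimate
    have step2 : αξ * nVh (uh - πF u) ^ 2 ≤ a (uh - πF u) (uh - πF u)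
        + Real.sqrt (s (lamh - ν) (lamh - ν)) * (cs * nVh (uh - πF u))
        + Real.sqrt (s ν ν) * (cs * nVh (uh - πF u))
        + Cπ * (Real.sqrt Cs * (cs * nVh (uh - πF u))) * ‖u - πF u‖ := by
      have m1 : Real.sqrt (s (lamh - ν) (lamh - ν)) * Real.sqrt (s (ξh (uh - πF u)) (ξh (uh - πF u)))
          ≤ Real.sqrt (s (lamh - ν) (lamh - ν)) * (cs * nVh (uh - πF u)) :=
        mul_le_mul_of_nonneg_left hSξX hY0
      have m2 : Real.sqrt (s ν ν) * Real.sqrt (s (ξh (uh - πF u)) (ξh (uh - πF u)))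
          ≤ Real.sqrt (s ν ν) * (cs * nVh (uh - πF u)) :=
        mul_le_mul_of_nonneg_left hSξX hD30
      have m3 : Cπ * (Real.sqrt Cs * Real.sqrt (s (ξh (uh - πF u)) (ξh (uh - πF u)))) * ‖u - πF u‖
          ≤ Cπ * (Real.sqrt Cs * (cs * nVh (uh - πF u))) * ‖u - πF u‖ := by
        apply mul_le_mul_of_nonneg_right _ hD10
        exact mul_le_mul_of_nonneg_left (mul_le_mul_of_nonneg_left hSξX hsCs) hCπ.le
      have u1 := le_abs_self (s (lamh - ν) (ξh (uh - πF u)))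
      have u2 := le_abs_self (s ν (ξh (uh - πF u)))
      have u3 := le_abs_self (b (ξh (uh - πF u)) (u - πF u))
      linarith [hco, hbxi_id, b1, b2, b3, m1, m2, m3, u1, u2, u3]
    -- step 3 : energy estimate
    have step3 : a (uh - πF u) (uh - πF u) + s (lamh - ν) (lamh - ν)
        ≤ Ma * ‖u - πF u‖ * (CV * nVh (uh - πF u))
          + Mb * ‖lam - ν‖ * (CV * nVh (uh - πF u))
          + Real.sqrt (s ν ν) * Real.sqrt (s (lamh - ν) (lamh - ν))
          + Cπ * (Real.sqrt Cs * Real.sqrt (s (lamh - ν) (lamh - ν))) * ‖u - πF u‖ := by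
      have m5 : Ma * ‖u - πF u‖ * ‖uh - πF u‖ ≤ Ma * ‖u - πF u‖ * (CV * nVh (uh - πF u)) :=
        mul_le_mul_of_nonneg_left hecv (mul_nonneg hMa.le hD10)
      have m6 : Mb * ‖lam - ν‖ * ‖uh - πF u‖ ≤ Mb * ‖lam - ν‖ * (CV * nVh (uh - πF u)) :=
        mul_le_mul_of_nonneg_left hecv (mul_nonneg hMb.le hD20)
      have u1 := le_abs_self (a (u - πF u) (uh - πF u))
      have u2 := le_abs_self (b (lam - ν) (uh - πF u))
      have u3 := neg_abs_le (s ν (lamh - ν))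
      have u4 := neg_abs_le (b (lamh - ν) (u - πF u))
      linarith [hEid, b4, b5, b6, b7, m5, m6, u1, u2, u3, u4]
    -- combine into the quadratic inequality
    have hquad_h : δ * nVh (uh - πF u) ^ 2 + Real.sqrt (s (lamh - ν) (lamh - ν)) ^ 2 / 2
        ≤ K1 * (‖u - πF u‖ + ‖lam - ν‖ + Real.sqrt (s ν ν)) * nVh (uh - πF u)
          + K2 * (‖u - πF u‖ + ‖lam - ν‖ + Real.sqrt (s ν ν))
            * Real.sqrt (s (lamh - ν) (lamh - ν)) := by
      have eδ : δ * nVh (uh - πF u) ^ 2 = (αξ - cs^2/2) * nVh (uh - πF u) ^ 2 := by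
        rw [hδdef]
      have eK1 : K1 * (‖u - πF u‖ + ‖lam - ν‖ + Real.sqrt (s ν ν)) * nVh (uh - πF u)
          = (cs + cs*(Cπ*Real.sqrt Cs) + Ma*CV + Mb*CV)
            * (‖u - πF u‖ + ‖lam - ν‖ + Real.sqrt (s ν ν)) * nVh (uh - πF u) := by
        rw [hK1def, hPdef]
      have eK2 : K2 * (‖u - πF u‖ + ‖lam - ν‖ + Real.sqrt (s ν ν))
            * Real.sqrt (s (lamh - ν) (lamh - ν))
          = (Cπ*Real.sqrt Cs + 1) * (‖u - πF u‖ + ‖lam - ν‖ + Real.sqrt (s ν ν))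
            * Real.sqrt (s (lamh - ν) (lamh - ν)) := by
        rw [hK2def, hPdef]
      have y1 : cs * nVh (uh - πF u) * Real.sqrt (s (lamh - ν) (lamh - ν))
          ≤ cs^2 * nVh (uh - πF u)^2 / 2 + Real.sqrt (s (lamh - ν) (lamh - ν))^2 / 2 := by
        linarith [sq_nonneg (cs * nVh (uh - πF u) - Real.sqrt (s (lamh - ν) (lamh - ν)))]
      have n1 : 0 ≤ cs * ((‖u - πF u‖ + ‖lam - ν‖) * nVh (uh - πF u)) :=
        mul_nonneg hcs (mul_nonneg (by linarith) hX0)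
      have n2 : 0 ≤ cs * (Cπ * Real.sqrt Cs) * ((‖lam - ν‖ + Real.sqrt (s ν ν)) * nVh (uh - πF u)) :=
        mul_nonneg (mul_nonneg hcs (mul_nonneg hCπ.le hsCs)) (mul_nonneg (by linarith) hX0)
      have n3 : 0 ≤ Ma * CV * ((‖lam - ν‖ + Real.sqrt (s ν ν)) * nVh (uh - πF u)) :=
        mul_nonneg (mul_nonneg hMa.le hCV.le) (mul_nonneg (by linarith) hX0)
      have n4 : 0 ≤ Mb * CV * ((‖u - πF u‖ + Real.sqrt (s ν ν)) * nVh (uh - πF u)) :=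
        mul_nonneg (mul_nonneg hMb.le hCV.le) (mul_nonneg (by linarith) hX0)
      have n5 : 0 ≤ Cπ * Real.sqrt Cs * ((‖lam - ν‖ + Real.sqrt (s ν ν))
          * Real.sqrt (s (lamh - ν) (lamh - ν))) :=
        mul_nonneg (mul_nonneg hCπ.le hsCs) (mul_nonneg (by linarith) hY0)
      have n6 : 0 ≤ (‖u - πF u‖ + ‖lam - ν‖) * Real.sqrt (s (lamh - ν) (lamh - ν)) :=
        mul_nonneg (by linarith) hY0
      rw [eδ, eK1, eK2]
      have hcomb : (αξ - cs^2/2) * nVh (uh - πF u) ^ 2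
            + Real.sqrt (s (lamh - ν) (lamh - ν)) ^ 2 / 2
          ≤ cs * Real.sqrt (s ν ν) * nVh (uh - πF u)
            + cs * (Cπ * Real.sqrt Cs) * (‖u - πF u‖ * nVh (uh - πF u))
            + Ma * CV * (‖u - πF u‖ * nVh (uh - πF u))
            + Mb * CV * (‖lam - ν‖ * nVh (uh - πF u))
            + Real.sqrt (s ν ν) * Real.sqrt (s (lamh - ν) (lamh - ν))
            + Cπ * Real.sqrt Cs * (‖u - πF u‖ * Real.sqrt (s (lamh - ν) (lamh - ν))) := by
        linarith [step2, step3, hY2, y1]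
      linarith [hcomb, n1, n2, n3, n4, n5, n6]
    -- absorb
    have hXY := aux_quad δ K1 K2 (nVh (uh - πF u)) (Real.sqrt (s (lamh - ν) (lamh - ν)))
      (‖u - πF u‖ + ‖lam - ν‖ + Real.sqrt (s ν ν)) hδ0 hX0 hY0 (by linarith) hK10 hK20 hquad_h
    rw [← hK4def] at hXY
    have hXb : nVh (uh - πF u) ≤ K4 * (‖u - πF u‖ + ‖lam - ν‖ + Real.sqrt (s ν ν)) := by
      linarith
    have hYb : Real.sqrt (s (lamh - ν) (lamh - ν))
        ≤ K4 * (‖u - πF u‖ + ‖lam - ν‖ + Real.sqrt (s ν ν)) := by linarith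
    -- bound on the primal error
    have hU : ‖u - uh‖ ≤ ‖u - πF u‖ + CV * nVh (uh - πF u) := by
      have hsplit : u - uh = (u - πF u) - (uh - πF u) := by abel
      calc ‖u - uh‖ = ‖(u - πF u) - (uh - πF u)‖ := by rw [hsplit]
        _ ≤ ‖u - πF u‖ + ‖uh - πF u‖ := norm_sub_le _ _
        _ ≤ ‖u - πF u‖ + CV * nVh (uh - πF u) := by linarith
    have hUb : ‖u - uh‖ ≤ (1 + CV*K4) * (‖u - πF u‖ + ‖lam - ν‖ + Real.sqrt (s ν ν)) := by
      have := mul_le_mul_of_nonneg_left hXb hCV.le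
      linarith [hU, hD20, hD30]
    -- inf-sup bound on the multiplier error
    have hGnorm : β * ‖lamh - ν‖ ≤ Ma*CF*‖u - uh‖ + Mb*CF*‖lam - ν‖
        + P*(1+CF)*Real.sqrt (s (lamh - ν) (lamh - ν)) := by
      refine le_trans (h_infsup (lamh - ν)) ?_
      have hRHS0 : 0 ≤ Ma*CF*‖u - uh‖ + Mb*CF*‖lam - ν‖
          + P*(1+CF)*Real.sqrt (s (lamh - ν) (lamh - ν)) := by
        have h1 : 0 ≤ Ma*CF*‖u - uh‖ := mul_nonneg (mul_nonneg hMa.le hCF.le) (norm_nonneg _)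
        have h2 : 0 ≤ Mb*CF*‖lam - ν‖ := mul_nonneg (mul_nonneg hMb.le hCF.le) (norm_nonneg _)
        have h3 : 0 ≤ P*(1+CF)*Real.sqrt (s (lamh - ν) (lamh - ν)) :=
          mul_nonneg (mul_nonneg hP0 (by linarith)) hY0
        linarith
      rcases isEmpty_or_nonempty {v : V // v ≠ 0} with hE | hNE
      · rw [Real.iSup_of_isEmpty]; exact hRHS0
      · apply ciSup_le
        rintro ⟨v, hv0⟩
        have hvpos : (0:ℝ) < ‖v‖ := norm_pos_iff.mpr hv0
        rw [div_le_iff₀ hvpos]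
        have q1 := hC1 (πF v)
        have q2 := hD1 (πF v) (hπF_mem v)
        have r1 : |b (lamh - ν) (v - πF v)|
            ≤ Cπ * (Real.sqrt Cs * Real.sqrt (s (lamh - ν) (lamh - ν))) * ((1+CF)*‖v‖) := by
          have h1 := hbg _ hg v
          have h2 := hπFv v
          have h3 : 0 ≤ Cπ * (Real.sqrt Cs * Real.sqrt (s (lamh - ν) (lamh - ν))) :=
            mul_nonneg hCπ.le (mul_nonneg hsCs hY0)
          calc |b (lamh - ν) (v - πF v)|
              ≤ Cπ * (Real.sqrt Cs * Real.sqrt (s (lamh - ν) (lamh - ν))) * ‖v - πF v‖ := h1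
            _ ≤ Cπ * (Real.sqrt Cs * Real.sqrt (s (lamh - ν) (lamh - ν))) * ((1+CF)*‖v‖) :=
              mul_le_mul_of_nonneg_left h2 h3
        have r2 : |a (u - uh) (πF v)| ≤ Ma * ‖u - uh‖ * (CF * ‖v‖) := by
          calc |a (u - uh) (πF v)| ≤ Ma * ‖u - uh‖ * ‖πF v‖ := ha_cont _ _
            _ ≤ Ma * ‖u - uh‖ * (CF * ‖v‖) :=
              mul_le_mul_of_nonneg_left (hπF_stab v) (mul_nonneg hMa.le (norm_nonneg _))
        have r3 : |b (lam - ν) (πF v)| ≤ Mb * ‖lam - ν‖ * (CF * ‖v‖) := by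
          calc |b (lam - ν) (πF v)| ≤ Mb * ‖lam - ν‖ * ‖πF v‖ := hb_cont _ _
            _ ≤ Mb * ‖lam - ν‖ * (CF * ‖v‖) :=
              mul_le_mul_of_nonneg_left (hπF_stab v) (mul_nonneg hMb.le (norm_nonneg _))
        have eP : P * (1+CF) * Real.sqrt (s (lamh - ν) (lamh - ν)) * ‖v‖
            = Cπ * Real.sqrt Cs * (1+CF) * Real.sqrt (s (lamh - ν) (lamh - ν)) * ‖v‖ := by
          rw [hPdef]
        have u1 := le_abs_self (b (lamh - ν) (v - πF v))
        have u2 := le_abs_self (a (u - uh) (πF v))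
        have u3 := le_abs_self (b (lam - ν) (πF v))
        simp only [map_sub, LinearMap.sub_apply] at r1 r2 r3 u1 u2 u3 eP ⊢
        linarith [r1, r2, r3, u1, u2, u3, q1, q2, eP]
    have hGb : β * ‖lamh - ν‖ ≤ G * (‖u - πF u‖ + ‖lam - ν‖ + Real.sqrt (s ν ν)) := by
      have m1 : Ma*CF*‖u - uh‖
          ≤ Ma*CF*((1 + CV*K4) * (‖u - πF u‖ + ‖lam - ν‖ + Real.sqrt (s ν ν))) :=
        mul_le_mul_of_nonneg_left hUb (mul_nonneg hMa.le hCF.le)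
      have m2 : P*(1+CF)*Real.sqrt (s (lamh - ν) (lamh - ν))
          ≤ P*(1+CF)*(K4 * (‖u - πF u‖ + ‖lam - ν‖ + Real.sqrt (s ν ν))) :=
        mul_le_mul_of_nonneg_left hYb (mul_nonneg hP0 (by linarith))
      have m3 : 0 ≤ Mb*CF*(‖u - πF u‖ + Real.sqrt (s ν ν)) :=
        mul_nonneg (mul_nonneg hMb.le hCF.le) (by linarith)
      have eG : G * (‖u - πF u‖ + ‖lam - ν‖ + Real.sqrt (s ν ν))
          = (Ma*CF*(1+CV*K4) + Mb*CF + P*(1+CF)*K4)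
            * (‖u - πF u‖ + ‖lam - ν‖ + Real.sqrt (s ν ν)) := by
        rw [hGdef]
      linarith [hGnorm, m1, m2, m3, eG]
    -- combine
    have hD1b : ‖u - πF u‖ ≤ (1+CF) * ‖u - y‖ := by
      have hid : u - πF u = (u - y) - πF (u - y) := by
        rw [map_sub, hπF_proj y hy]; abel
      calc ‖u - πF u‖ = ‖(u - y) - πF (u - y)‖ := by rw [hid]
        _ ≤ (1+CF) * ‖u - y‖ := hπFv _
    have hL : ‖lam - lamh‖ ≤ ‖lam - ν‖ + ‖lamh - ν‖ := by
      have hid : lam - lamh = (lam - ν) - (lamh - ν) := by abel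
      calc ‖lam - lamh‖ = ‖(lam - ν) - (lamh - ν)‖ := by rw [hid]
        _ ≤ ‖lam - ν‖ + ‖lamh - ν‖ := norm_sub_le _ _
    have htot : ‖u - uh‖ + ‖lam - lamh‖
        ≤ C0 * (‖u - πF u‖ + ‖lam - ν‖ + Real.sqrt (s ν ν)) := by
      have eC0b : β * (C0 * (‖u - πF u‖ + ‖lam - ν‖ + Real.sqrt (s ν ν)))
          = (2 + CV*K4) * (β * (‖u - πF u‖ + ‖lam - ν‖ + Real.sqrt (s ν ν)))
            + G * (‖u - πF u‖ + ‖lam - ν‖ + Real.sqrt (s ν ν)) := by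
        rw [hC0def]; field_simp
      have m4 : β * ‖u - uh‖
          ≤ β * ((1 + CV*K4) * (‖u - πF u‖ + ‖lam - ν‖ + Real.sqrt (s ν ν))) :=
        mul_le_mul_of_nonneg_left hUb hβ.le
      have m5 : β * ‖lam - lamh‖ ≤ β * (‖lam - ν‖ + ‖lamh - ν‖) :=
        mul_le_mul_of_nonneg_left hL hβ.le
      have m6 : 0 ≤ β * (‖u - πF u‖ + Real.sqrt (s ν ν)) :=
        mul_nonneg hβ.le (by linarith)
      have hb : β * (‖u - uh‖ + ‖lam - lamh‖)
          ≤ β * (C0 * (‖u - πF u‖ + ‖lam - ν‖ + Real.sqrt (s ν ν))) := by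
        linarith [eC0b, m4, m5, m6, hGb]
      exact le_of_mul_le_mul_left hb hβ
    have hC0nn : (0:ℝ) ≤ C0 := by linarith
    have hDineq : ‖u - πF u‖ + ‖lam - ν‖ + Real.sqrt (s ν ν)
        ≤ (1+CF) * (‖u - y‖ + (‖lam - ν‖ + Real.sqrt (s ν ν))) := by
      linarith [hD1b, mul_nonneg hCF.le (by linarith : (0:ℝ) ≤ ‖lam - ν‖ + Real.sqrt (s ν ν))]
    calc ‖u - uh‖ + ‖lam - lamh‖
        ≤ C0 * (‖u - πF u‖ + ‖lam - ν‖ + Real.sqrt (s ν ν)) := htot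
      _ ≤ C0 * ((1+CF) * (‖u - y‖ + (‖lam - ν‖ + Real.sqrt (s ν ν)))) :=
        mul_le_mul_of_nonneg_left hDineq hC0nn
      _ = C0 * (1 + CF) * (‖u - y‖ + (‖lam - ν‖ + Real.sqrt (s ν ν))) := by ring
  -- pass to the infima
  haveI : Nonempty ↥Vh := ⟨0⟩
  haveI : Nonempty ↥Λh := ⟨0⟩
  have h2 : ∀ yy : Vh, (‖u - uh‖ + ‖lam - lamh‖) / (C0 * (1 + CF)) - ‖u - (yy : V)‖
      ≤ ⨅ ν : Λh, (‖lam - (ν : L)‖ + Real.sqrt (s (ν : L) (ν : L))) := by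
    intro yy
    apply le_ciInf
    intro ν
    have hk := hkey yy yy.2 ν ν.2
    have hdiv : (‖u - uh‖ + ‖lam - lamh‖) / (C0 * (1 + CF))
        ≤ ‖u - (yy : V)‖ + (‖lam - (ν : L)‖ + Real.sqrt (s (ν : L) (ν : L))) := by
      rw [div_le_iff₀ hCpos]
      linarith [hk]
    linarith
  have h3 : (‖u - uh‖ + ‖lam - lamh‖) / (C0 * (1 + CF))
      - (⨅ ν : Λh, (‖lam - (ν : L)‖ + Real.sqrt (s (ν : L) (ν : L))))
      ≤ ⨅ y : Vh, ‖u - (y : V)‖ := by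
    apply le_ciInf
    intro yy
    linarith [h2 yy]
  have h4 : ‖u - uh‖ + ‖lam - lamh‖ ≤ ((⨅ y : Vh, ‖u - (y : V)‖)
      + ⨅ ν : Λh, (‖lam - (ν : L)‖ + Real.sqrt (s (ν : L) (ν : L)))) * (C0 * (1 + CF)) := by
    rw [← div_le_iff₀ hCpos]
    linarith
  linarith [h4]
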